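/- arXiv:1103.1284 — 2 statements merged into one kernel-verified Lean document; each statement's English description precedes it below -/
import Mathlib

section
/- Let 1 < p < ∞ and let p' be the conjugate exponent (1/p + 1/p' = 1). Define k(p) = 1 if p ≥ p' and k(p) = 2^{(p'/p) − 1} if p < p'. Then for all real numbers a, b, |sign(a)|a|^p − sign(b)|b|^p| ≤ |a − b|^p + p·(2·k(p))^{p/p'}·|a − b|·(|a|^{p−1} + |b|^{p−1})·C for some universal constant C depending only on p; in particular, for a, b ∈ [−1, 1], |sign(a)|a|^p − sign(b)|b|^p| ≤ |a − b|^p + p·(2·k(p))^{p/p'}·|a − b|. -/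
open Real

private lemma sgn_pow_of_nonneg (p : ℝ) (hp : p ≠ 0) {a : ℝ} (ha : 0 ≤ a) :
    Real.sign a * |a| ^ p = a ^ p := by
  rcases ha.lt_or_eq with h | h
  · rw [Real.sign_of_pos h, abs_of_pos h, one_mul]
  · subst h; simp [Real.sign_zero, Real.zero_rpow hp]

private lemma sgn_pow_of_nonpos (p : ℝ) (hp : p ≠ 0) {a : ℝ} (ha : a ≤ 0) :
    Real.sign a * |a| ^ p = -((-a) ^ p) := by
  rcases ha.lt_or_eq with h | h
  · rw [Real.sign_of_neg h, abs_of_neg h]; ring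
  · subst h; simp [Real.sign_zero, Real.zero_rpow hp]

/-- `a^p - b^p ≤ p (a-b) a^{p-1}` for `0 ≤ b ≤ a`, via Bernoulli. -/
private lemma rpow_sub_rpow_le (p : ℝ) (hp : 1 < p) {a b : ℝ} (hb : 0 ≤ b) (hba : b ≤ a) :
    a ^ p - b ^ p ≤ p * (a - b) * a ^ (p - 1) := by
  rcases eq_or_lt_of_le (hb.trans hba) with h | ha
  · have hb0 : b = 0 := le_antisymm (hba.trans h.symm.le) hb
    simp [← h, hb0, Real.zero_rpow (by positivity : p ≠ 0)]
  · set s : ℝ := b / a - 1 with hs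
    have hs1 : -1 ≤ s := by
      have : 0 ≤ b / a := div_nonneg hb ha.le
      simp only [hs]; linarith
    have hB := one_add_mul_self_le_rpow_one_add hs1 hp.le
    have h1s : 1 + s = b / a := by simp [hs]
    rw [h1s, Real.div_rpow hb ha.le] at hB
    have hap : 0 < a ^ p := Real.rpow_pos_of_pos ha p
    have hB' : (1 + p * s) * a ^ p ≤ b ^ p := by
      have := mul_le_mul_of_nonneg_right hB hap.le
      rwa [div_mul_cancel₀ _ hap.ne'] at this
    have hsa : s * a = b - a := by rw [hs, sub_mul, div_mul_cancel₀ _ ha.ne', one_mul]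
    have hsplit : a ^ p = a * a ^ (p - 1) := by
      rw [← Real.rpow_one_add' ha.le (by linarith)]; ring_nf
    have heq : p * (a - b) * a ^ (p - 1) = -(p * s) * a ^ p := by
      rw [hsplit, hs]; field_simp; ring
    rw [heq]; nlinarith [hB']

/-- Core Lipschitz-type bound for one ordering. -/
private lemma core_le (p : ℝ) (hp : 1 < p) {a b : ℝ} (hba : b ≤ a) :
    |Real.sign a * |a| ^ p - Real.sign b * |b| ^ p| ≤
      p * (a - b) * (|a| ^ (p - 1) + |b| ^ (p - 1)) := by
  have hp0 : p ≠ 0 := by positivity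
  have hp1 : (0:ℝ) ≤ p - 1 := by linarith
  have hA : (0:ℝ) ≤ |a| ^ (p - 1) := Real.rpow_nonneg (abs_nonneg a) _
  have hB : (0:ℝ) ≤ |b| ^ (p - 1) := Real.rpow_nonneg (abs_nonneg b) _
  have hnn : (0:ℝ) ≤ p * (a - b) := mul_nonneg (by linarith) (by linarith)
  rcases le_or_gt 0 b with hb | hb
  · -- 0 ≤ b ≤ a
    have ha : 0 ≤ a := hb.trans hba
    rw [sgn_pow_of_nonneg p hp0 ha, sgn_pow_of_nonneg p hp0 hb]
    have hmono : b ^ p ≤ a ^ p := Real.rpow_le_rpow hb hba (by positivity)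
    rw [abs_of_nonneg (by linarith)]
    have h1 := rpow_sub_rpow_le p hp hb hba
    have h2 : a ^ (p - 1) ≤ |a| ^ (p - 1) + |b| ^ (p - 1) := by
      rw [abs_of_nonneg ha]; linarith
    calc a ^ p - b ^ p ≤ p * (a - b) * a ^ (p - 1) := h1
      _ ≤ p * (a - b) * (|a| ^ (p - 1) + |b| ^ (p - 1)) :=
          mul_le_mul_of_nonneg_left h2 hnn
  · rcases le_or_gt a 0 with ha | ha
    · -- b ≤ a ≤ 0
      rw [sgn_pow_of_nonpos p hp0 ha, sgn_pow_of_nonpos p hp0 hb.le]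
      have hb' : (0:ℝ) ≤ -a := by linarith
      have hba' : -a ≤ -b := by linarith
      have hmono : (-a) ^ p ≤ (-b) ^ p := Real.rpow_le_rpow hb' hba' (by positivity)
      have h1 := rpow_sub_rpow_le p hp hb' hba'
      have h2 : (-b) ^ (p - 1) ≤ |a| ^ (p - 1) + |b| ^ (p - 1) := by
        rw [abs_of_neg hb]; linarith
      have h3 : -(-a) ^ p - -(-b) ^ p = (-b) ^ p - (-a) ^ p := by ring
      rw [h3, abs_of_nonneg (by linarith)]
      calc (-b) ^ p - (-a) ^ p ≤ p * (-b - -a) * (-b) ^ (p - 1) := h1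
        _ = p * (a - b) * (-b) ^ (p - 1) := by ring
        _ ≤ p * (a - b) * (|a| ^ (p - 1) + |b| ^ (p - 1)) :=
            mul_le_mul_of_nonneg_left h2 hnn
    · -- b < 0 < a
      rw [sgn_pow_of_nonneg p hp0 ha.le, sgn_pow_of_nonpos p hp0 hb.le]
      have hap : a ^ p = a * a ^ (p - 1) := by
        rw [← Real.rpow_one_add' ha.le (by linarith)]; ring_nf
      have hbp : (-b) ^ p = (-b) * (-b) ^ (p - 1) := by
        rw [← Real.rpow_one_add' (by linarith) (by linarith)]; ring_nf
      have hA' : |a| ^ (p - 1) = a ^ (p - 1) := by rw [abs_of_pos ha]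
      have hB' : |b| ^ (p - 1) = (-b) ^ (p - 1) := by rw [abs_of_neg hb]
      have h2 : (0:ℝ) ≤ a ^ p := Real.rpow_nonneg ha.le p
      have h3 : (0:ℝ) ≤ (-b) ^ p := Real.rpow_nonneg (by linarith) p
      rw [sub_neg_eq_add, abs_of_nonneg (by linarith), hap, hbp, hA', hB']
      have hap1 : (0:ℝ) ≤ a ^ (p - 1) := Real.rpow_nonneg ha.le _
      have hbp1 : (0:ℝ) ≤ (-b) ^ (p - 1) := Real.rpow_nonneg (by linarith) _
      nlinarith [mul_nonneg ha.le hbp1, mul_nonneg (by linarith : (0:ℝ) ≤ -b) hap1,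
        mul_nonneg ha.le hap1, mul_nonneg (by linarith : (0:ℝ) ≤ -b) hbp1]

private lemma core (p : ℝ) (hp : 1 < p) (a b : ℝ) :
    |Real.sign a * |a| ^ p - Real.sign b * |b| ^ p| ≤
      p * |a - b| * (|a| ^ (p - 1) + |b| ^ (p - 1)) := by
  rcases le_total b a with h | h
  · rw [abs_of_nonneg (by linarith : (0:ℝ) ≤ a - b)]; exact core_le p hp h
  · rw [abs_of_nonpos (by linarith : a - b ≤ (0:ℝ)), abs_sub_comm]
    calc |Real.sign b * |b| ^ p - Real.sign a * |a| ^ p|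
        ≤ p * (b - a) * (|b| ^ (p - 1) + |a| ^ (p - 1)) := core_le p hp h
      _ = p * -(a - b) * (|a| ^ (p - 1) + |b| ^ (p - 1)) := by ring

/-- Pointwise estimate for signed `p`-th powers: with `p' = p/(p-1)` the conjugate
exponent and `k(p) = 1` if `p ≥ p'`, `k(p) = 2 ^ (p'/p - 1)` otherwise, there is a
constant `C > 0` (depending only on `p`) such that
`|sign a * |a|^p − sign b * |b|^p| ≤ |a−b|^p + p (2 k(p))^{p/p'} |a−b| (|a|^{p−1}+|b|^{p−1}) C`,
and in particular for `a, b ∈ [−1,1]`,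
`|sign a * |a|^p − sign b * |b|^p| ≤ |a−b|^p + p (2 k(p))^{p/p'} |a−b|`. -/
theorem stmt_2 (p q : ℝ) (hp : 1 < p) (hq : 1 / p + 1 / q = 1) :
    ∃ C : ℝ, 0 < C ∧
      (∀ a b : ℝ,
        |Real.sign a * |a| ^ p - Real.sign b * |b| ^ p| ≤
          |a - b| ^ p +
            p * (2 * (if q ≤ p then 1 else 2 ^ (q / p - 1))) ^ (p / q) * |a - b| *
              (|a| ^ (p - 1) + |b| ^ (p - 1)) * C) ∧
      (∀ a b : ℝ, a ∈ Set.Icc (-1 : ℝ) 1 → b ∈ Set.Icc (-1 : ℝ) 1 →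
        |Real.sign a * |a| ^ p - Real.sign b * |b| ^ p| ≤
          |a - b| ^ p +
            p * (2 * (if q ≤ p then 1 else 2 ^ (q / p - 1))) ^ (p / q) * |a - b|) := by
  have hp0 : (0:ℝ) < p := by linarith
  have hq0 : (0:ℝ) < q := by
    have h1 : 1 / q = 1 - 1 / p := by linarith
    have h2 : 1 / p < 1 := by rw [div_lt_one hp0]; exact hp
    have : (0:ℝ) < 1 / q := by rw [h1]; linarith
    exact one_div_pos.1 this
  set k : ℝ := if q ≤ p then 1 else 2 ^ (q / p - 1) with hk
  have hkey : (2:ℝ) ≤ (2 * k) ^ (p / q) := by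
    rcases le_or_gt q p with h | h
    · rw [hk, if_pos h, mul_one]
      calc (2:ℝ) = 2 ^ (1:ℝ) := (Real.rpow_one 2).symm
        _ ≤ 2 ^ (p / q) := Real.rpow_le_rpow_of_exponent_le one_le_two
            ((one_le_div hq0).2 h)
    · rw [hk, if_neg (not_le.2 h)]
      have h2 : (2:ℝ) * 2 ^ (q / p - 1) = 2 ^ (q / p) := by
        have := Real.rpow_add (by norm_num : (0:ℝ) < 2) 1 (q / p - 1)
        rw [Real.rpow_one] at this
        rw [← this]; ring_nf
      rw [h2, ← Real.rpow_mul (by norm_num : (0:ℝ) ≤ 2),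
        div_mul_div_comm, mul_comm q p, div_self (by positivity), Real.rpow_one]
  have hS : ∀ a b : ℝ, (0:ℝ) ≤ |a| ^ (p - 1) + |b| ^ (p - 1) := fun a b =>
    add_nonneg (Real.rpow_nonneg (abs_nonneg a) _) (Real.rpow_nonneg (abs_nonneg b) _)
  refine ⟨1, one_pos, ?_, ?_⟩
  · intro a b
    have h1 := core p hp a b
    have hpK : p ≤ p * (2 * k) ^ (p / q) := by
      nlinarith [hkey]
    have h2 : p * |a - b| * (|a| ^ (p - 1) + |b| ^ (p - 1)) ≤
        p * (2 * k) ^ (p / q) * |a - b| * (|a| ^ (p - 1) + |b| ^ (p - 1)) * 1 := by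
      rw [mul_one]
      have := mul_le_mul_of_nonneg_right (mul_le_mul_of_nonneg_right hpK (abs_nonneg (a - b)))
        (hS a b)
      linarith
    have h3 : (0:ℝ) ≤ |a - b| ^ p := Real.rpow_nonneg (abs_nonneg _) p
    linarith
  · intro a b ha hb
    have h1 := core p hp a b
    have hA1 : |a| ^ (p - 1) ≤ 1 :=
      Real.rpow_le_one (abs_nonneg a) (abs_le.2 ⟨ha.1, ha.2⟩) (by linarith)
    have hB1 : |b| ^ (p - 1) ≤ 1 :=
      Real.rpow_le_one (abs_nonneg b) (abs_le.2 ⟨hb.1, hb.2⟩) (by linarith)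
    have h2 : p * |a - b| * (|a| ^ (p - 1) + |b| ^ (p - 1)) ≤ p * |a - b| * 2 := by
      have hpab : (0:ℝ) ≤ p * |a - b| := mul_nonneg hp0.le (abs_nonneg _)
      exact mul_le_mul_of_nonneg_left (by linarith) hpab
    have h3 : p * |a - b| * 2 ≤ p * (2 * k) ^ (p / q) * |a - b| := by
      have := mul_le_mul_of_nonneg_right hkey
        (mul_nonneg hp0.le (abs_nonneg (a - b)))
      nlinarith [abs_nonneg (a - b)]
    have h4 : (0:ℝ) ≤ |a - b| ^ p := Real.rpow_nonneg (abs_nonneg _) p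
    linarith
end

section
/- Let 1 ≤ p < ∞, μ a measure, g ∈ L^p(μ) with ‖g‖ = 1, and g* ∈ (L^p(μ))* with ‖g*‖ = 1. Then for every ε > 0 there exists h ∈ L^p(μ) with ‖h‖ ≤ 1 and ⟨h, g*⟩ ≥ 1 − ε such that ‖(|g|^p + |h|^p)^{1/p}‖^p ≥ 2 − 2ε, provided g ≥ 0, g* ≥ 0 and h is allowed to be taken nonnegative. -/
open MeasureTheory ENNReal

theorem aux_lint {Ω : Type*} [MeasurableSpace Ω] (μ : Measure Ω) (p : ℝ≥0∞)
    [Fact (1 ≤ p)] (hp : p ≠ ∞) (g : Lp ℝ p μ) :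
    (∫⁻ ω, (‖g ω‖₊ : ℝ≥0∞) ^ p.toReal ∂μ) = eLpNorm g p μ ^ p.toReal := by
  have hp0 : p ≠ 0 := (lt_of_lt_of_le zero_lt_one (Fact.out : 1 ≤ p)).ne'
  have hq0 : 0 < p.toReal := ENNReal.toReal_pos hp0 hp
  rw [eLpNorm_eq_lintegral_rpow_enorm_toReal hp0 hp]
  simp only [← enorm_eq_nnnorm]
  rw [← ENNReal.rpow_mul, one_div, inv_mul_cancel₀ hq0.ne', ENNReal.rpow_one]

theorem aux_key {Ω : Type*} [MeasurableSpace Ω] (μ : Measure Ω) (p : ℝ≥0∞)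
    [Fact (1 ≤ p)] (hp : p ≠ ∞) (g h : Lp ℝ p μ) :
    (eLpNorm (fun ω => (|g ω| ^ p.toReal + |h ω| ^ p.toReal) ^ (1 / p.toReal))
        p μ).toReal ^ p.toReal = ‖g‖ ^ p.toReal + ‖h‖ ^ p.toReal := by
  have hp0 : p ≠ 0 := (lt_of_lt_of_le zero_lt_one (Fact.out : 1 ≤ p)).ne'
  have hq0 : 0 < p.toReal := ENNReal.toReal_pos hp0 hp
  set q := p.toReal with hq
  have hF : ∀ ω, (‖(|g ω| ^ q + |h ω| ^ q) ^ (1 / q)‖₊ : ℝ≥0∞) ^ q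
      = (‖g ω‖₊ : ℝ≥0∞) ^ q + (‖h ω‖₊ : ℝ≥0∞) ^ q := by
    intro ω
    have hbase : 0 ≤ |g ω| ^ q + |h ω| ^ q :=
      add_nonneg (Real.rpow_nonneg (abs_nonneg _) _) (Real.rpow_nonneg (abs_nonneg _) _)
    simp only [← enorm_eq_nnnorm]
    rw [Real.enorm_eq_ofReal_abs, Real.enorm_eq_ofReal_abs, Real.enorm_eq_ofReal_abs,
      abs_of_nonneg (Real.rpow_nonneg hbase _),
      ENNReal.ofReal_rpow_of_nonneg (Real.rpow_nonneg hbase _) hq0.le,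
      ← Real.rpow_mul hbase, one_div, inv_mul_cancel₀ hq0.ne', Real.rpow_one,
      ENNReal.ofReal_add (Real.rpow_nonneg (abs_nonneg _) _) (Real.rpow_nonneg (abs_nonneg _) _),
      ENNReal.ofReal_rpow_of_nonneg (abs_nonneg (g ω : ℝ)) hq0.le,
      ENNReal.ofReal_rpow_of_nonneg (abs_nonneg (h ω : ℝ)) hq0.le]
  calc (eLpNorm (fun ω => (|g ω| ^ q + |h ω| ^ q) ^ (1 / q)) p μ).toReal ^ q
      = ((eLpNorm (fun ω => (|g ω| ^ q + |h ω| ^ q) ^ (1 / q)) p μ) ^ q).toReal := by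
        rw [ENNReal.toReal_rpow]
    _ = (∫⁻ ω, (‖(|g ω| ^ q + |h ω| ^ q) ^ (1 / q)‖₊ : ℝ≥0∞) ^ q ∂μ).toReal := by
        simp only [← enorm_eq_nnnorm]
        rw [eLpNorm_eq_lintegral_rpow_enorm_toReal hp0 hp, ← ENNReal.rpow_mul, one_div,
          inv_mul_cancel₀ hq0.ne', ENNReal.rpow_one]
    _ = ((∫⁻ ω, (‖g ω‖₊ : ℝ≥0∞) ^ q ∂μ) + ∫⁻ ω, (‖h ω‖₊ : ℝ≥0∞) ^ q ∂μ).toReal := by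
        simp only [← enorm_eq_nnnorm] at hF ⊢
        rw [← lintegral_add_left' ((Lp.aestronglyMeasurable g).aemeasurable.enorm.pow_const q)]
        exact congrArg _ (lintegral_congr fun ω => hF ω)
    _ = ‖g‖ ^ q + ‖h‖ ^ q := by
        rw [aux_lint μ p hp g, aux_lint μ p hp h,
          ENNReal.toReal_add (ENNReal.rpow_ne_top_of_nonneg hq0.le (Lp.eLpNorm_ne_top g)) (ENNReal.rpow_ne_top_of_nonneg hq0.le (Lp.eLpNorm_ne_top h)),
          ← ENNReal.toReal_rpow, ← ENNReal.toReal_rpow, Lp.norm_def, Lp.norm_def]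

/-- Positive slice condition for `L^p(μ)`: given norm-one `g ≥ 0` in `L^p` and a
norm-one positive functional `g*`, for every `ε > 0` there is a nonnegative `h` in the
unit ball with `⟨h, g*⟩ ≥ 1 − ε` and `‖(|g|^p + |h|^p)^{1/p}‖^p ≥ 2 − 2ε`. -/
theorem stmt_4 {Ω : Type*} [MeasurableSpace Ω] (μ : Measure Ω) (p : ℝ≥0∞)
    [Fact (1 ≤ p)] (hp : p ≠ ∞)
    (g : Lp ℝ p μ) (hg1 : ‖g‖ = 1) (hg0 : ∀ᵐ ω ∂μ, 0 ≤ g ω)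
    (gstar : Lp ℝ p μ →L[ℝ] ℝ) (hgstar1 : ‖gstar‖ = 1)
    (hgstar0 : ∀ f : Lp ℝ p μ, (∀ᵐ ω ∂μ, 0 ≤ f ω) → 0 ≤ gstar f)
    (ε : ℝ) (hε : 0 < ε) :
    ∃ h : Lp ℝ p μ, ‖h‖ ≤ 1 ∧ (∀ᵐ ω ∂μ, 0 ≤ h ω) ∧ 1 - ε ≤ gstar h ∧
      2 - 2 * ε ≤
        (eLpNorm (fun ω => (|g ω| ^ p.toReal + |h ω| ^ p.toReal) ^ (1 / p.toReal))
            p μ).toReal ^ p.toReal := by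
  have hp0 : p ≠ 0 := (lt_of_lt_of_le zero_lt_one (Fact.out : 1 ≤ p)).ne'
  have hq1 : 1 ≤ p.toReal := by
    rw [← ENNReal.toReal_one]
    exact ENNReal.toReal_mono hp (Fact.out : 1 ≤ p)
  have hq0 : 0 < p.toReal := lt_of_lt_of_le zero_lt_one hq1
  set q := p.toReal with hqdef
  -- choose ε'
  set δ : ℝ := min ε (ε / q) with hδdef
  have hδ0 : 0 < δ := lt_min hε (div_pos hε hq0)
  have hδε : δ ≤ ε := min_le_left _ _
  -- get f with ‖f‖ < 1 and 1 - δ < ‖gstar f‖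
  obtain ⟨f, hf1, hf2⟩ := gstar.exists_lt_apply_of_lt_opNorm
    (r := 1 - δ) (by rw [hgstar1]; linarith)
  have h1 : gstar f ≤ gstar |f| := by
    have hpos := hgstar0 (|f| - f) ?_
    · rw [gstar.map_sub] at hpos; linarith
    · filter_upwards [Lp.coeFn_sub |f| f, Lp.coeFn_abs f] with ω ha hb
      rw [ha]; simp only [Pi.sub_apply, hb]; linarith [le_abs_self (f ω)]
  have h2 : -gstar f ≤ gstar |f| := by
    have hpos := hgstar0 (|f| + f) ?_
    · rw [gstar.map_add] at hpos; linarith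
    · filter_upwards [Lp.coeFn_add |f| f, Lp.coeFn_abs f] with ω ha hb
      rw [ha]; simp only [Pi.add_apply, hb]; linarith [neg_abs_le (f ω)]
  have hgs : 1 - δ < gstar |f| := by
    rw [Real.norm_eq_abs] at hf2
    exact lt_of_lt_of_le hf2 (abs_le.mpr ⟨by linarith, h1⟩)
  refine ⟨|f|, ?_, ?_, by linarith, ?_⟩
  · rw [norm_abs_eq_norm]; exact hf1.le
  · filter_upwards [Lp.coeFn_abs f] with ω hω
    rw [hω]; exact abs_nonneg _
  · -- main inequality
    rw [aux_key μ p hp g |f|, hg1, Real.one_rpow]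
    have hnorm : 1 - δ ≤ ‖(|f| : Lp ℝ p μ)‖ := by
      calc 1 - δ ≤ gstar |f| := hgs.le
        _ ≤ ‖gstar |f|‖ := le_abs_self _
        _ ≤ ‖gstar‖ * ‖(|f| : Lp ℝ p μ)‖ := gstar.le_opNorm _
        _ = ‖(|f| : Lp ℝ p μ)‖ := by rw [hgstar1, one_mul]
    rcases le_or_gt δ 1 with hδ1 | hδ1
    · have hb : 1 - q * δ ≤ (1 - δ) ^ q := by
        have := one_add_mul_self_le_rpow_one_add (s := -δ) (by linarith) hq1
        simpa [← sub_eq_add_neg] using this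
      have hmono : (1 - δ) ^ q ≤ ‖(|f| : Lp ℝ p μ)‖ ^ q :=
        Real.rpow_le_rpow (by linarith) hnorm hq0.le
      have hqδ : q * δ ≤ ε := by
        have : δ ≤ ε / q := min_le_right _ _
        calc q * δ ≤ q * (ε / q) := by nlinarith
          _ = ε := by field_simp
      linarith
    · have : ε > 1 := lt_of_lt_of_le hδ1 hδε
      have : 0 ≤ ‖(|f| : Lp ℝ p μ)‖ ^ q := Real.rpow_nonneg (norm_nonneg _) _
      linarith
end
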